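/- For each integer n ≥ 4, let θ = π/(2n) and let M(n) be the largest natural number j such that (4j+5)θ < π/2; define D_n = ∏_{j=0}^{M(n)} sin((4j+5)θ) / sin((4j+3)θ). Then there exists a constant C > 0 such that D_n ∼ C·√n as n → ∞; in particular, D_n → ∞ as n → ∞. -/

import Mathlib

open Filter Topology Finset Real

noncomputable def th (n : ℕ) : ℝ := π / (2 * (n:ℝ))
def mm (n : ℕ) : ℕ := (n - 2) / 4
noncomputable def xx (n j : ℕ) : ℝ :=
  (Real.sin (2 * th n) / Real.sin ((4*(j:ℝ)+3) * th n))^2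
noncomputable def gg (n j : ℕ) : ℝ :=
  if j < mm n ∧ 6 ≤ n then Real.log (1 - xx n j) else 0
noncomputable def gl (j : ℕ) : ℝ := Real.log (1 - (2/(4*(j:ℝ)+3))^2)
noncomputable def bnd (j : ℕ) : ℝ :=
  if j = 0 then Real.log (25/9) else 20/(4*(j:ℝ)+3)^2

lemma th_pos {n : ℕ} (hn : 1 ≤ n) : 0 < th n := by
  have h : (0:ℝ) < n := by exact_mod_cast hn
  unfold th; positivity

lemma th_lt_half {n k : ℕ} (hkn : k < n) (hn : 1 ≤ n) : (k:ℝ) * th n < π/2 := by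
  have hkR : (k:ℝ) < (n:ℝ) := by exact_mod_cast hkn
  have := mul_lt_mul_of_pos_right hkR (th_pos hn)
  calc (k:ℝ) * th n < (n:ℝ) * th n := this
    _ = π/2 := by
      have h : (0:ℝ) < n := by exact_mod_cast hn
      rw [th]; field_simp

lemma sin_k_pos {n k : ℕ} (hk : 1 ≤ k) (hkn : k < n) (hn : 1 ≤ n) :
    0 < Real.sin ((k:ℝ) * th n) := by
  apply Real.sin_pos_of_pos_of_lt_pi
  · have h : (0:ℝ) < k := by exact_mod_cast hk
    exact mul_pos h (th_pos hn)
  · exact (th_lt_half hkn hn).trans (by linarith [Real.pi_pos])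

lemma tendsto_th : Tendsto th atTop (𝓝 0) := by
  have h : Tendsto (fun n:ℕ => (π/2) * (1/(n:ℝ))) atTop (𝓝 ((π/2) * 0)) :=
    tendsto_one_div_atTop_nhds_zero_nat.const_mul _
  rw [mul_zero] at h
  refine h.congr fun n => ?_
  rw [mul_one_div, div_div, th]

lemma tendsto_sin_div_self' {u : ℕ → ℝ} (h0 : Tendsto u atTop (𝓝 0))
    (hne : ∀ᶠ n in atTop, u n ≠ 0) :
    Tendsto (fun n => Real.sin (u n) / u n) atTop (𝓝 1) := by
  have hd := Real.hasDerivAt_sin 0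
  rw [Real.cos_zero, hasDerivAt_iff_tendsto_slope] at hd
  have hu : Tendsto u atTop (𝓝[≠] (0:ℝ)) :=
    tendsto_nhdsWithin_of_tendsto_nhds_of_eventually_within _ h0 (hne.mono fun n h => h)
  refine (hd.comp hu).congr' ?_
  filter_upwards [hne] with n h
  simp [slope_def_field, h]

lemma tendsto_sin_c {c : ℝ} (hc : 0 < c) :
    Tendsto (fun n : ℕ => Real.sin (c * th n) / (c * th n)) atTop (𝓝 1) := by
  apply tendsto_sin_div_self'
  · simpa using tendsto_th.const_mul c
  · filter_upwards [eventually_ge_atTop 1] with n hn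
    exact ne_of_gt (mul_pos hc (th_pos hn))

lemma sin_mul_sin' (x y : ℝ) :
    Real.sin (x+y) * Real.sin (x-y) = Real.sin x^2 - Real.sin y^2 := by
  rw [Real.sin_add, Real.sin_sub]
  nlinarith [Real.sin_sq_add_cos_sq x, Real.sin_sq_add_cos_sq y]

lemma prod_div_telescope' (f : ℕ → ℝ) (m : ℕ) (hf : ∀ j, j ≤ m → f j ≠ 0) :
    ∏ j ∈ Finset.range m, f (j+1) / f j = f m / f 0 := by
  induction m with
  | zero => simp [div_self (hf 0 le_rfl)]
  | succ k ih =>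
    rw [Finset.prod_range_succ, ih (fun j hj => hf j (hj.trans k.le_succ))]
    have h0 : f 0 ≠ 0 := hf 0 (Nat.zero_le _)
    have hk : f k ≠ 0 := hf k (Nat.le_succ _)
    field_simp

lemma filterEq48 {n : ℕ} (hn : 4 ≤ n) :
    (Finset.range n).filter
        (fun j : ℕ => ((4 * j + 5) : ℝ) * (π / (2 * n)) < π / 2) =
      Finset.range (mm n) := by
  have hn0 : (0:ℝ) < n := by exact_mod_cast (by omega : 0 < n)
  ext j
  simp only [Finset.mem_filter, Finset.mem_range]
  have hiff : ((4 * (j:ℝ) + 5) * (π / (2 * n)) < π / 2) ↔ ((4*j+5 : ℕ) : ℝ) < (n:ℝ) := by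
    rw [show (π/2 : ℝ) = (n:ℝ) * (π / (2*n)) by field_simp]
    rw [mul_lt_mul_iff_left₀ (by positivity : (0:ℝ) < π/(2*(n:ℝ)))]
    push_cast; ring_nf
  rw [hiff, Nat.cast_lt]
  unfold mm
  omega

lemma xx_lt_one {n j : ℕ} (hj : j < mm n) (hn : 6 ≤ n) : xx n j < 1 := by
  have hkn : 4*j+3 < n := by unfold mm at hj; omega
  have h2n : (2:ℕ) < n := by omega
  have ht := th_pos (by omega : 1 ≤ n)
  have h2 : 0 < Real.sin (2 * th n) := by
    have := sin_k_pos (n := n) (k := 2) (by norm_num) h2n (by omega)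
    simpa using this
  have h3 : Real.sin (2 * th n) < Real.sin ((4*(j:ℝ)+3) * th n) := by
    have hcast : ((4*j+3 : ℕ):ℝ) = 4*(j:ℝ)+3 := by push_cast; ring
    have hhalf := th_lt_half hkn (by omega : 1 ≤ n)
    rw [hcast] at hhalf
    have h2half : 2 * th n < π/2 := by
      have := th_lt_half (n := n) (k := 2) h2n (by omega)
      simpa using this
    apply Real.strictMonoOn_sin
    · constructor
      · linarith [Real.pi_pos]
      · linarith
    · constructor
      · have : 0 ≤ (4*(j:ℝ)+3) * th n := by positivity
        linarith [Real.pi_pos]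
      · linarith
    · have : (2:ℝ) < 4*(j:ℝ)+3 := by
        have : (0:ℝ) ≤ (j:ℝ) := Nat.cast_nonneg j
        linarith
      exact mul_lt_mul_of_pos_right this ht
  have h3pos : 0 < Real.sin ((4*(j:ℝ)+3) * th n) := by linarith
  have hlt : Real.sin (2 * th n) / Real.sin ((4*(j:ℝ)+3) * th n) < 1 :=
    (div_lt_one h3pos).2 h3
  have hnn : 0 ≤ Real.sin (2 * th n) / Real.sin ((4*(j:ℝ)+3) * th n) :=
    div_nonneg h2.le h3pos.le
  calc xx n j = (Real.sin (2 * th n) / Real.sin ((4*(j:ℝ)+3) * th n))^2 := rfl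
    _ < 1 := by nlinarith

lemma xx_nonneg (n j : ℕ) : 0 ≤ xx n j := sq_nonneg _

lemma xx_le {n j : ℕ} (hj : j < mm n) (hn : 6 ≤ n) (hj1 : 1 ≤ j) :
    xx n j ≤ 10/(4*(j:ℝ)+3)^2 := by
  have hkn : 4*j+3 < n := by unfold mm at hj; omega
  have ht := th_pos (by omega : 1 ≤ n)
  have hcast : ((4*j+3 : ℕ):ℝ) = 4*(j:ℝ)+3 := by push_cast; ring
  have hk3 : (3:ℝ) ≤ 4*(j:ℝ)+3 := by
    have : (0:ℝ) ≤ (j:ℝ) := Nat.cast_nonneg j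
    linarith
  have hhalf : (4*(j:ℝ)+3) * th n ≤ π/2 := by
    have := th_lt_half hkn (by omega : 1 ≤ n); rw [hcast] at this; linarith
  have hlow : 2/π * ((4*(j:ℝ)+3) * th n) ≤ Real.sin ((4*(j:ℝ)+3) * th n) :=
    Real.mul_le_sin (by positivity) hhalf
  have hup : Real.sin (2 * th n) ≤ 2 * th n := Real.sin_le (by positivity)
  have hpos3 : 0 < Real.sin ((4*(j:ℝ)+3) * th n) := by
    have := sin_k_pos (n := n) (k := 4*j+3) (by omega) hkn (by omega)
    rwa [hcast] at this
  have h2pos : 0 < Real.sin (2 * th n) := by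
    have := sin_k_pos (n := n) (k := 2) (by norm_num) (by omega) (by omega)
    simpa using this
  have hratio : Real.sin (2 * th n) / Real.sin ((4*(j:ℝ)+3) * th n) ≤ π/(4*(j:ℝ)+3) := by
    rw [div_le_div_iff₀ hpos3 (by linarith)]
    have hπ : 0 < π := Real.pi_pos
    calc Real.sin (2 * th n) * (4*(j:ℝ)+3) ≤ 2 * th n * (4*(j:ℝ)+3) := by nlinarith
      _ = π * (2/π * ((4*(j:ℝ)+3) * th n)) := by field_simp
      _ ≤ π * Real.sin ((4*(j:ℝ)+3) * th n) := by nlinarith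
  have hnn : 0 ≤ Real.sin (2 * th n) / Real.sin ((4*(j:ℝ)+3) * th n) :=
    div_nonneg h2pos.le hpos3.le
  have hsq : xx n j ≤ (π/(4*(j:ℝ)+3))^2 := by
    unfold xx
    exact pow_le_pow_left₀ hnn hratio 2
  have hpi2 : π^2 ≤ 10 := by nlinarith [Real.pi_lt_d2, Real.pi_pos]
  calc xx n j ≤ (π/(4*(j:ℝ)+3))^2 := hsq
    _ = π^2/(4*(j:ℝ)+3)^2 := by rw [div_pow]
    _ ≤ 10/(4*(j:ℝ)+3)^2 := by
      gcongr

lemma th_le {n : ℕ} (hn : 4 ≤ n) : th n ≤ 2/5 := by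
  have h4 : (4:ℝ) ≤ n := by exact_mod_cast hn
  have hpi : π < 3.15 := Real.pi_lt_d2
  rw [th, div_le_iff₀ (by linarith)]
  nlinarith

lemma cos_th {n : ℕ} (hn : 4 ≤ n) : 0.92 ≤ Real.cos (th n) := by
  have h := Real.one_sub_sq_div_two_le_cos (x := th n)
  have ht := th_pos (by omega : 1 ≤ n)
  have htle := th_le hn
  nlinarith

lemma ratio_zero {n : ℕ} (hn : 4 ≤ n) :
    Real.sin (2 * th n) ≤ (4/5) * Real.sin (3 * th n) := by
  have ht := th_pos (by omega : 1 ≤ n)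
  have htle := th_le hn
  have hc : 0.92 ≤ Real.cos (th n) := cos_th hn
  have hc1 : Real.cos (th n) ≤ 1 := Real.cos_le_one _
  have hs : 0 < Real.sin (th n) :=
    Real.sin_pos_of_pos_of_lt_pi ht (by nlinarith [Real.pi_gt_three])
  have hs2 : Real.sin (th n)^2 = 1 - Real.cos (th n)^2 := by
    nlinarith [Real.sin_sq_add_cos_sq (th n)]
  have hcube : Real.sin (th n)^3 = Real.sin (th n) * (1 - Real.cos (th n)^2) := by
    rw [pow_succ, hs2]; ring
  rw [Real.sin_two_mul, Real.sin_three_mul, hcube]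
  have hA : 0 ≤ Real.sin (th n) * (Real.cos (th n) - 0.92) :=
    mul_nonneg hs.le (by linarith)
  have hB : 0 ≤ Real.sin (th n) * (Real.cos (th n) - 0.92) * Real.cos (th n) :=
    mul_nonneg hA (by linarith)
  nlinarith

lemma xx_zero_le {n : ℕ} (hn : 6 ≤ n) : xx n 0 ≤ 16/25 := by
  have hkn : (3:ℕ) < n := by omega
  have h3pos : 0 < Real.sin (3 * th n) := by
    have := sin_k_pos (n := n) (k := 3) (by norm_num) hkn (by omega)
    simpa using this
  have h2pos : 0 < Real.sin (2 * th n) := by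
    have := sin_k_pos (n := n) (k := 2) (by norm_num) (by omega) (by omega)
    simpa using this
  have hr := ratio_zero (by omega : 4 ≤ n)
  unfold xx
  norm_num
  have hle : Real.sin (2 * th n) / Real.sin (3 * th n) ≤ 4/5 :=
    (div_le_iff₀ h3pos).2 (by linarith)
  have hnn : 0 ≤ Real.sin (2 * th n) / Real.sin (3 * th n) := div_nonneg h2pos.le h3pos.le
  nlinarith

lemma bnd_nonneg (j : ℕ) : 0 ≤ bnd j := by
  unfold bnd
  split
  · exact Real.log_nonneg (by norm_num)
  · positivity

lemma norm_gg_le (n j : ℕ) : ‖gg n j‖ ≤ bnd j := by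
  unfold gg
  split
  case isFalse => simpa using bnd_nonneg j
  case isTrue h =>
    obtain ⟨hj, hn⟩ := h
    have hx1 := xx_lt_one hj hn
    have hx0 := xx_nonneg n j
    have hlogle : Real.log (1 - xx n j) ≤ 0 := Real.log_nonpos (by linarith) (by linarith)
    rw [Real.norm_eq_abs, abs_of_nonpos hlogle, ← Real.log_inv]
    rcases Nat.eq_zero_or_pos j with rfl | hj1
    · have hx : xx n 0 ≤ 16/25 := xx_zero_le hn
      rw [bnd, if_pos rfl]
      apply Real.log_le_log (inv_pos.2 (by linarith))
      rw [inv_le_comm₀ (by linarith) (by norm_num)]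
      linarith
    · have hx : xx n j ≤ 10/(4*(j:ℝ)+3)^2 := xx_le hj hn hj1
      have hk7 : (7:ℝ) ≤ 4*(j:ℝ)+3 := by
        have : (1:ℝ) ≤ (j:ℝ) := by exact_mod_cast hj1
        linarith
      have hxs : xx n j ≤ 10/49 := by
        calc xx n j ≤ 10/(4*(j:ℝ)+3)^2 := hx
          _ ≤ 10/49 := by gcongr <;> nlinarith
      have h1x : (0:ℝ) < 1 - xx n j := by linarith
      rw [bnd, if_neg (by omega)]
      have hlog : Real.log (1 - xx n j)⁻¹ ≤ (1 - xx n j)⁻¹ - 1 :=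
        Real.log_le_sub_one_of_pos (by positivity)
      have heq : (1 - xx n j)⁻¹ - 1 = xx n j / (1 - xx n j) := by field_simp; ring
      rw [heq] at hlog
      calc Real.log (1 - xx n j)⁻¹ ≤ xx n j / (1 - xx n j) := hlog
        _ ≤ xx n j / (39/49) := by gcongr; linarith
        _ ≤ 2 * xx n j := by linarith [xx_nonneg n j]
        _ ≤ 20/(4*(j:ℝ)+3)^2 := by
            have h20 : (20:ℝ)/(4*(j:ℝ)+3)^2 = 2*(10/(4*(j:ℝ)+3)^2) := by ring
            linarith

lemma bnd_summable : Summable bnd := by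
  rw [← summable_nat_add_iff (f := bnd) 1]
  have h0 : Summable (fun j:ℕ => 1/((j:ℝ))^2) := Real.summable_one_div_nat_pow.mpr one_lt_two
  have h1 : Summable (fun j:ℕ => 1/(((j+1:ℕ)):ℝ)^2) :=
    (summable_nat_add_iff (f := fun j:ℕ => 1/((j:ℝ))^2) 1).2 h0
  have h2 : Summable (fun j:ℕ => 20 * (1/(((j+1:ℕ)):ℝ)^2)) := h1.mul_left 20
  apply h2.of_nonneg_of_le (fun j => bnd_nonneg _)
  intro j
  rw [bnd, if_neg (Nat.succ_ne_zero j)]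
  have hj : (0:ℝ) < ((j:ℝ)+1) := by positivity
  have hcast : ((j+1:ℕ):ℝ) = (j:ℝ)+1 := by push_cast; ring
  rw [hcast, mul_one_div]
  apply div_le_div_of_nonneg_left (by norm_num) (by positivity)
  push_cast
  nlinarith

lemma gg_tendsto (j : ℕ) : Tendsto (fun n => gg n j) atTop (𝓝 (gl j)) := by
  have hjR : (0:ℝ) ≤ (j:ℝ) := Nat.cast_nonneg j
  have hk : (0:ℝ) < 4*(j:ℝ)+3 := by linarith
  have h2 := tendsto_sin_c (c := 2) two_pos
  have hkk := tendsto_sin_c hk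
  have hr : Tendsto (fun n => Real.sin (2*th n) / Real.sin ((4*(j:ℝ)+3)*th n)) atTop
      (𝓝 (2/(4*(j:ℝ)+3))) := by
    have h := (h2.div hkk one_ne_zero).mul_const (2/(4*(j:ℝ)+3))
    rw [div_one, one_mul] at h
    refine h.congr' ?_
    filter_upwards [eventually_ge_atTop (4*j+6)] with n hn
    have ht := th_pos (by omega : 1 ≤ n)
    have hs : 0 < Real.sin ((4*(j:ℝ)+3) * th n) := by
      have := sin_k_pos (n := n) (k := 4*j+3) (by omega) (by omega) (by omega)
      have hc : ((4*j+3:ℕ):ℝ) = 4*(j:ℝ)+3 := by push_cast; ring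
      rwa [hc] at this
    simp only [Pi.div_apply]
    field_simp
  have hx : Tendsto (fun n => xx n j) atTop (𝓝 ((2/(4*(j:ℝ)+3))^2)) := by
    unfold xx
    exact hr.pow 2
  have h1x : Tendsto (fun n => 1 - xx n j) atTop (𝓝 (1 - (2/(4*(j:ℝ)+3))^2)) :=
    tendsto_const_nhds.sub hx
  have hne : (1 - (2/(4*(j:ℝ)+3))^2) ≠ 0 := by
    have h3 : (3:ℝ) ≤ 4*(j:ℝ)+3 := by linarith
    have : (2/(4*(j:ℝ)+3))^2 ≤ (2/3)^2 := by
      apply pow_le_pow_left₀ (by positivity)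
      apply div_le_div_of_nonneg_left (by norm_num) (by norm_num) h3
    nlinarith
  have hlog := h1x.log hne
  refine hlog.congr' ?_
  filter_upwards [eventually_ge_atTop (4*j+6)] with n hn
  have hcond : j < mm n ∧ 6 ≤ n := by unfold mm; omega
  rw [gg, if_pos hcond]

lemma key_prod {n : ℕ} (hn : 6 ≤ n) :
    (∏ j ∈ Finset.range (mm n),
        Real.sin ((4*(j:ℝ)+5) * th n) / Real.sin ((4*(j:ℝ)+3) * th n))^2 =
      (Real.sin ((4*((mm n):ℝ)+1) * th n) / Real.sin (th n)) *
        Real.exp (∑ j ∈ Finset.range (mm n), gg n j) := by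
  have hmn : 4 * mm n + 1 < n := by unfold mm; omega
  set f : ℕ → ℝ := fun i => Real.sin ((4*(i:ℝ)+1) * th n) with hf_def
  have hfpos : ∀ i, i ≤ mm n → 0 < f i := by
    intro i hi
    have hcast : ((4*i+1:ℕ):ℝ) = 4*(i:ℝ)+1 := by push_cast; ring
    have := sin_k_pos (n := n) (k := 4*i+1) (by omega) (by omega) (by omega)
    rwa [hcast] at this
  have hstep : ∀ j ∈ Finset.range (mm n),
      (Real.sin ((4*(j:ℝ)+5) * th n) / Real.sin ((4*(j:ℝ)+3) * th n))^2 =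
        (f (j+1) / f j) * Real.exp (gg n j) := by
    intro j hj
    rw [Finset.mem_range] at hj
    have hs1 : 0 < Real.sin ((4*(j:ℝ)+1) * th n) := hfpos j hj.le
    have hs3 : 0 < Real.sin ((4*(j:ℝ)+3) * th n) := by
      have hcast : ((4*j+3:ℕ):ℝ) = 4*(j:ℝ)+3 := by push_cast; ring
      have := sin_k_pos (n := n) (k := 4*j+3) (by omega) (by omega) (by omega)
      rwa [hcast] at this
    have hs5 : 0 < Real.sin ((4*(j:ℝ)+5) * th n) := by
      have hcast : ((4*j+5:ℕ):ℝ) = 4*(j:ℝ)+5 := by push_cast; ring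
      have := sin_k_pos (n := n) (k := 4*j+5) (by omega) (by omega) (by omega)
      rwa [hcast] at this
    have hexp : Real.exp (gg n j) = 1 - xx n j := by
      rw [gg, if_pos ⟨hj, hn⟩, Real.exp_log (by linarith [xx_lt_one hj hn])]
    have hss : Real.sin ((4*(j:ℝ)+5) * th n) * Real.sin ((4*(j:ℝ)+1) * th n) =
        Real.sin ((4*(j:ℝ)+3) * th n)^2 - Real.sin (2 * th n)^2 := by
      have h := sin_mul_sin' ((4*(j:ℝ)+3) * th n) (2 * th n)
      have e1 : (4*(j:ℝ)+3) * th n + 2 * th n = (4*(j:ℝ)+5) * th n := by ring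
      have e2 : (4*(j:ℝ)+3) * th n - 2 * th n = (4*(j:ℝ)+1) * th n := by ring
      rwa [e1, e2] at h
    have hfj1 : f (j+1) = Real.sin ((4*(j:ℝ)+5) * th n) := by
      have hc : (4*(((j+1):ℕ):ℝ)+1) = 4*(j:ℝ)+5 := by push_cast; ring
      simp only [hf_def, hc]
    rw [hexp, hfj1]
    have hxx : 1 - xx n j =
        Real.sin ((4*(j:ℝ)+5) * th n) * Real.sin ((4*(j:ℝ)+1) * th n) /
          Real.sin ((4*(j:ℝ)+3) * th n)^2 := by
      rw [hss, xx]
      rw [div_pow, one_sub_div (pow_ne_zero 2 hs3.ne')]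
    rw [hxx]
    have hfj : f j = Real.sin ((4*(j:ℝ)+1) * th n) := rfl
    rw [hfj]
    rw [div_pow, div_mul_div_comm,
      show Real.sin ((4*(j:ℝ)+5) * th n) * (Real.sin ((4*(j:ℝ)+5) * th n) * Real.sin ((4*(j:ℝ)+1) * th n))
        = Real.sin ((4*(j:ℝ)+5) * th n)^2 * Real.sin ((4*(j:ℝ)+1) * th n) by ring,
      show Real.sin ((4*(j:ℝ)+1) * th n) * Real.sin ((4*(j:ℝ)+3) * th n)^2
        = Real.sin ((4*(j:ℝ)+3) * th n)^2 * Real.sin ((4*(j:ℝ)+1) * th n) by ring,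
      mul_div_mul_right _ _ hs1.ne']
  rw [← Finset.prod_pow, Finset.prod_congr rfl hstep, Finset.prod_mul_distrib,
    prod_div_telescope' f (mm n) (fun j hj => (hfpos j hj).ne'), Real.exp_sum]
  have hf0 : f 0 = Real.sin (th n) := by
    simp only [hf_def]
    norm_num
  rw [hf0]

lemma T_tendsto :
    Tendsto (fun n : ℕ =>
        (Real.sin ((4*((mm n):ℝ)+1) * th n) / Real.sin (th n)) / (n:ℝ))
      atTop (𝓝 (2/π)) := by
  have hden : Tendsto (fun n : ℕ => (n:ℝ) * Real.sin (th n)) atTop (𝓝 (π/2)) := by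
    have h1 : Tendsto (fun n : ℕ => Real.sin (th n) / th n) atTop (𝓝 1) := by
      apply tendsto_sin_div_self' tendsto_th
      filter_upwards [eventually_ge_atTop 1] with n hn
      exact (th_pos hn).ne'
    have h2 := h1.const_mul (π/2)
    rw [mul_one] at h2
    refine h2.congr' ?_
    filter_upwards [eventually_ge_atTop 1] with n hn
    have hn0 : (0:ℝ) < n := by exact_mod_cast hn
    rw [th]
    field_simp
  have hnum : Tendsto (fun n : ℕ => Real.sin ((4*((mm n):ℝ)+1) * th n)) atTop (𝓝 1) := by
    have hcos : Tendsto (fun n : ℕ => Real.cos (4 * th n)) atTop (𝓝 1) := by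
      have h4 : Tendsto (fun n : ℕ => 4 * th n) atTop (𝓝 0) := by
        simpa using tendsto_th.const_mul (4:ℝ)
      have := (Real.continuous_cos.tendsto 0).comp h4
      simpa [Function.comp_def] using this
    apply tendsto_of_tendsto_of_tendsto_of_le_of_le' hcos tendsto_const_nhds
    · filter_upwards [eventually_ge_atTop 6] with n hn
      have ht := th_pos (by omega : 1 ≤ n)
      have hmn : 4 * mm n + 1 < n := by unfold mm; omega
      have hm5 : n ≤ 4 * mm n + 5 := by unfold mm; omega
      have hy : (4*((mm n):ℝ)+1) * th n ≤ π/2 := by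
        have h := th_lt_half (n := n) (k := 4*mm n+1) hmn (by omega)
        have hc : ((4*mm n+1:ℕ):ℝ) = 4*((mm n):ℝ)+1 := by push_cast; ring
        rw [hc] at h; linarith
      have hx : -(π/2) ≤ π/2 - 4 * th n := by
        have h4p : 4 * th n ≤ π := by
          have h6 : (6:ℝ) ≤ n := by exact_mod_cast hn
          rw [th, mul_div_assoc', div_le_iff₀ (by linarith : (0:ℝ) < 2*(n:ℝ))]
          nlinarith [Real.pi_pos]
        linarith
      have hxy : π/2 - 4 * th n ≤ (4*((mm n):ℝ)+1) * th n := by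
        have hpi2 : π/2 = (n:ℝ) * th n := by
          have hn0 : (0:ℝ) < n := by exact_mod_cast (by omega : 0 < n)
          rw [th]; field_simp
        rw [hpi2]
        have hcast : (n:ℝ) ≤ 4*((mm n):ℝ)+5 := by exact_mod_cast hm5
        nlinarith
      calc Real.cos (4 * th n) = Real.sin (π/2 - 4*th n) := (Real.sin_pi_div_two_sub _).symm
        _ ≤ Real.sin ((4*((mm n):ℝ)+1) * th n) :=
            Real.sin_le_sin_of_le_of_le_pi_div_two hx hy hxy
    · filter_upwards with n
      exact Real.sin_le_one _
  have h := hnum.div hden (by positivity : (π/2 : ℝ) ≠ 0)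
  have heq : (1:ℝ)/(π/2) = 2/π := by
    rw [div_div_eq_mul_div, one_mul]
  rw [heq] at h
  refine h.congr fun n => ?_
  rw [Pi.div_apply, div_div, mul_comm ((n:ℝ)) (Real.sin (th n))]

/-- The motivating example: for `θ = π/(2n)`, the product
`D n = ∏ sin((4j+5)θ) / sin((4j+3)θ)`, taken over those `j ≥ 0` for which the
argument `(4j+5)θ` stays below `π/2` (note any such `j` satisfies `j < n`),
satisfies `D n ∼ C * √n` for some constant `C > 0`; in particular `D n → ∞`. -/
theorem stmt_12 (D : ℕ → ℝ)
    (hD : ∀ n : ℕ, 4 ≤ n → D n =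
      ∏ j ∈ (Finset.range n).filter
          (fun j : ℕ => ((4 * j + 5) : ℝ) * (π / (2 * n)) < π / 2),
        Real.sin ((4 * j + 5) * (π / (2 * n))) /
          Real.sin ((4 * j + 3) * (π / (2 * n)))) :
    (∃ C : ℝ, 0 < C ∧
        Tendsto (fun n : ℕ => D n / Real.sqrt n) atTop (𝓝 C)) ∧
      Tendsto D atTop atTop := by
  -- the limit of the exponential sums
  set S : ℝ := ∑' j, gl j with hS
  have hG : Tendsto (fun n => ∑' j, gg n j) atTop (𝓝 S) :=
    tendsto_tsum_of_dominated_convergence bnd_summable gg_tendsto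
      (Eventually.of_forall fun n => norm_gg_le n)
  -- product formula for D
  have hDn : ∀ n : ℕ, 6 ≤ n → D n =
      ∏ j ∈ Finset.range (mm n),
        Real.sin ((4*(j:ℝ)+5) * th n) / Real.sin ((4*(j:ℝ)+3) * th n) := by
    intro n hn
    rw [hD n (by omega), filterEq48 (by omega)]
    rfl
  have hDpos : ∀ n : ℕ, 6 ≤ n → 0 < D n := by
    intro n hn
    rw [hDn n hn]
    apply Finset.prod_pos
    intro j hj
    rw [Finset.mem_range] at hj
    have hjmm : 4*j+5 < n := by unfold mm at hj; omega
    have hs3 : 0 < Real.sin ((4*(j:ℝ)+3) * th n) := by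
      have hcast : ((4*j+3:ℕ):ℝ) = 4*(j:ℝ)+3 := by push_cast; ring
      have := sin_k_pos (n := n) (k := 4*j+3) (by omega) (by omega) (by omega)
      rwa [hcast] at this
    have hs5 : 0 < Real.sin ((4*(j:ℝ)+5) * th n) := by
      have hcast : ((4*j+5:ℕ):ℝ) = 4*(j:ℝ)+5 := by push_cast; ring
      have := sin_k_pos (n := n) (k := 4*j+5) (by omega) (by omega) (by omega)
      rwa [hcast] at this
    positivity
  -- tsum over gg n is a finite sum
  have htsum : ∀ n : ℕ, (∑' j, gg n j) = ∑ j ∈ Finset.range (mm n), gg n j := by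
    intro n
    apply tsum_eq_sum
    intro j hj
    rw [Finset.mem_range] at hj
    rw [gg, if_neg (by omega)]
  -- the key eventual identity
  have hkey : ∀ n : ℕ, 6 ≤ n → D n / Real.sqrt n =
      Real.sqrt (((Real.sin ((4*((mm n):ℝ)+1) * th n) / Real.sin (th n)) / (n:ℝ)) *
        Real.exp (∑' j, gg n j)) := by
    intro n hn
    have hn0 : (0:ℝ) < n := by exact_mod_cast (by omega : 0 < n)
    have hDn' := hDn n hn
    have hsq : (D n / Real.sqrt n)^2 =
        ((Real.sin ((4*((mm n):ℝ)+1) * th n) / Real.sin (th n)) / (n:ℝ)) *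
          Real.exp (∑' j, gg n j) := by
      rw [div_pow, Real.sq_sqrt hn0.le, hDn', key_prod hn, htsum n]
      ring
    have hDnn : 0 ≤ D n / Real.sqrt n := div_nonneg (hDpos n hn).le (Real.sqrt_nonneg _)
    rw [← hsq, Real.sqrt_sq hDnn]
  -- the limit
  have hTR : Tendsto (fun n : ℕ =>
      ((Real.sin ((4*((mm n):ℝ)+1) * th n) / Real.sin (th n)) / (n:ℝ)) *
        Real.exp (∑' j, gg n j)) atTop (𝓝 ((2/π) * Real.exp S)) :=
    T_tendsto.mul hG.rexp
  have hCpos : (0:ℝ) < (2/π) * Real.exp S := by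
    have := Real.pi_pos
    positivity
  have hmain : Tendsto (fun n : ℕ => D n / Real.sqrt n) atTop
      (𝓝 (Real.sqrt ((2/π) * Real.exp S))) := by
    refine hTR.sqrt.congr' ?_
    filter_upwards [eventually_ge_atTop 6] with n hn
    exact (hkey n hn).symm
  refine ⟨⟨Real.sqrt ((2/π) * Real.exp S), Real.sqrt_pos.2 hCpos, hmain⟩, ?_⟩
  -- D tends to infinity
  have hsqrtn : Tendsto (fun n : ℕ => Real.sqrt (n:ℝ)) atTop atTop := by
    have h1 : Tendsto (fun x : ℝ => x ^ (1/(2:ℝ))) atTop atTop :=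
      tendsto_rpow_atTop (by norm_num)
    have h2 := h1.comp tendsto_natCast_atTop_atTop
    refine h2.congr fun n => ?_
    rw [Function.comp_apply, Real.sqrt_eq_rpow]
  have hprod := hsqrtn.atTop_mul_pos (Real.sqrt_pos.2 hCpos) hmain
  refine hprod.congr' ?_
  filter_upwards [eventually_ge_atTop 6] with n hn
  have hn0 : (0:ℝ) < n := by exact_mod_cast (by omega : 0 < n)
  have hsn : Real.sqrt (n:ℝ) ≠ 0 := (Real.sqrt_pos.2 hn0).ne'
  rw [mul_comm, div_mul_cancel₀ _ hsn]
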